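/- The dual subdivision of R is the convex hull of the two zonotopes: for every x ∈ ℝⁿ, R(x) := max(H₁(x)+Q₂(x), H₂(x)+Q₁(x)) = sup_{z ∈ convexHull(Z₁ ∪ Z₂)} ⟨z, x⟩. -/

import Mathlib

open Matrix Finset Pointwise

/-- Entrywise positive part of a matrix. -/
noncomputable def matPos {p n : ℕ} (M : Matrix (Fin p) (Fin n) ℝ) : Matrix (Fin p) (Fin n) ℝ :=
  fun i j => max (M i j) 0

/-- Entrywise negative part of a matrix. -/
noncomputable def matNeg {p n : ℕ} (M : Matrix (Fin p) (Fin n) ℝ) : Matrix (Fin p) (Fin n) ℝ :=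
  fun i j => max (-(M i j)) 0

/-- The tropical polynomial `H_i`. -/
noncomputable def Hpoly {p n k : ℕ} (A : Matrix (Fin p) (Fin n) ℝ)
    (B : Matrix (Fin k) (Fin p) ℝ) (i : Fin k) (x : Fin n → ℝ) : ℝ :=
  ∑ j, (matPos B i j * max (matPos A j ⬝ᵥ x) (matNeg A j ⬝ᵥ x)
        + matNeg B i j * (matNeg A j ⬝ᵥ x))

/-- The tropical polynomial `Q_i`. -/
noncomputable def Qpoly {p n k : ℕ} (A : Matrix (Fin p) (Fin n) ℝ)
    (B : Matrix (Fin k) (Fin p) ℝ) (i : Fin k) (x : Fin n → ℝ) : ℝ :=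
  ∑ j, (matNeg B i j * max (matPos A j ⬝ᵥ x) (matNeg A j ⬝ᵥ x)
        + matPos B i j * (matNeg A j ⬝ᵥ x))

/-- The zonotope `Z_{ij}`: Minkowski sum of the line segments
`[(B⁺(i,m)+B⁻(j,m))·A⁺(m,:), (B⁺(i,m)+B⁻(j,m))·A⁻(m,:)]` shifted by
`(A⁻)ᵀ (B⁻(i,:)+B⁺(j,:))ᵀ`. -/
noncomputable def zono {p n k : ℕ} (A : Matrix (Fin p) (Fin n) ℝ)
    (B : Matrix (Fin k) (Fin p) ℝ) (i j : Fin k) : Set (Fin n → ℝ) :=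
  (∑ m : Fin p,
      segment ℝ ((matPos B i m + matNeg B j m) • matPos A m)
        ((matPos B i m + matNeg B j m) • matNeg A m))
    + ({fun t => ∑ m, matNeg A m t * (matNeg B i m + matPos B j m)} : Set (Fin n → ℝ))


/-- The dual subdivision of `R` is the convex hull of the two zonotopes: `R(x)`, the maximum
of the two tropical monomials, is the support function of `convexHull (Z₁ ∪ Z₂)`. -/
noncomputable def dotL {n : ℕ} (x : Fin n → ℝ) : (Fin n → ℝ) →ₗ[ℝ] ℝ where
  toFun z := z ⬝ᵥ x
  map_add' u v := add_dotProduct u v x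
  map_smul' c u := smul_dotProduct c u x

theorem dotL_image_segment {n : ℕ} (x u v : Fin n → ℝ) :
    (dotL x) '' segment ℝ u v = Set.Icc (min (u ⬝ᵥ x) (v ⬝ᵥ x)) (max (u ⬝ᵥ x) (v ⬝ᵥ x)) := by
  rw [show ⇑(dotL x) = ⇑((dotL x).toAffineMap) from rfl, image_segment, segment_eq_Icc']
  rfl

theorem myIcc_add_Icc {a b c d : ℝ} (hab : a ≤ b) (hcd : c ≤ d) :
    Set.Icc a b + Set.Icc c d = Set.Icc (a + c) (b + d) := by
  apply Set.Subset.antisymm (Set.Icc_add_Icc_subset a b c d)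
  intro y hy
  obtain ⟨h1, h2⟩ := hy
  refine ⟨max a (y - d), ⟨le_max_left _ _, max_le hab (by linarith)⟩,
    y - max a (y - d), ⟨?_, ?_⟩, by ring⟩
  · rcases le_total a (y - d) with h | h
    · rw [max_eq_right h]; linarith
    · rw [max_eq_left h]; linarith
  · have := le_max_right a (y - d); linarith

theorem sum_Icc {ι : Type*} (s : Finset ι) (a b : ι → ℝ) (h : ∀ i ∈ s, a i ≤ b i) :
    ∑ i ∈ s, Set.Icc (a i) (b i) = Set.Icc (∑ i ∈ s, a i) (∑ i ∈ s, b i) := by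
  induction s using Finset.cons_induction with
  | empty => simp [← Set.singleton_zero]
  | cons j s hj ih =>
      rw [Finset.sum_cons, Finset.sum_cons, Finset.sum_cons,
        ih (fun i hi => h i (Finset.mem_cons_of_mem hi)),
        myIcc_add_Icc (h j (Finset.mem_cons_self _ _))
          (Finset.sum_le_sum fun i hi => h i (Finset.mem_cons_of_mem hi))]

theorem image_finsum {n p : ℕ} (f : (Fin n → ℝ) →ₗ[ℝ] ℝ) (s : Finset (Fin p))
    (g : Fin p → Set (Fin n → ℝ)) : f '' (∑ i ∈ s, g i) = ∑ i ∈ s, f '' g i := by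
  induction s using Finset.cons_induction with
  | empty => simp [← Set.singleton_zero]
  | cons a s ha ih => rw [Finset.sum_cons, Finset.sum_cons, Set.image_add f, ih]

theorem image_zono {p n k : ℕ} (A : Matrix (Fin p) (Fin n) ℝ) (B : Matrix (Fin k) (Fin p) ℝ)
    (i j : Fin k) (x : Fin n → ℝ) :
    ∃ lo, lo ≤ Hpoly A B i x + Qpoly A B j x ∧
      ⇑(dotL x) '' zono A B i j = Set.Icc lo (Hpoly A B i x + Qpoly A B j x) := by
  set c : Fin p → ℝ := fun m => matPos B i m + matNeg B j m with hcdef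
  have hcnn : ∀ m, 0 ≤ c m := fun m => add_nonneg (le_max_right _ _) (le_max_right _ _)
  set w : Fin n → ℝ := fun t => ∑ m, matNeg A m t * (matNeg B i m + matPos B j m) with hwdef
  have hminmax : ∀ m : Fin p, min (c m * (matPos A m ⬝ᵥ x)) (c m * (matNeg A m ⬝ᵥ x))
      ≤ max (c m * (matPos A m ⬝ᵥ x)) (c m * (matNeg A m ⬝ᵥ x)) := fun m => min_le_max
  have himg : ⇑(dotL x) '' zono A B i j =
      Set.Icc (∑ m, min (c m * (matPos A m ⬝ᵥ x)) (c m * (matNeg A m ⬝ᵥ x)) + dotL x w)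
              (∑ m, max (c m * (matPos A m ⬝ᵥ x)) (c m * (matNeg A m ⬝ᵥ x)) + dotL x w) := by
    rw [zono, Set.image_add (dotL x), image_finsum, Set.image_singleton]
    have hseg : ∀ m : Fin p, ⇑(dotL x) '' segment ℝ (c m • matPos A m) (c m • matNeg A m)
        = Set.Icc (min (c m * (matPos A m ⬝ᵥ x)) (c m * (matNeg A m ⬝ᵥ x)))
                  (max (c m * (matPos A m ⬝ᵥ x)) (c m * (matNeg A m ⬝ᵥ x))) := by
      intro m
      rw [dotL_image_segment, smul_dotProduct, smul_dotProduct]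
      rfl
    rw [Finset.sum_congr rfl fun m _ => hseg m, sum_Icc _ _ _ (fun m _ => hminmax m),
      show ({dotL x w} : Set ℝ) = Set.Icc (dotL x w) (dotL x w) from (Set.Icc_self _).symm,
      myIcc_add_Icc (Finset.sum_le_sum fun m _ => hminmax m) le_rfl]
  have ht : dotL x w = ∑ m, (matNeg B i m + matPos B j m) * (matNeg A m ⬝ᵥ x) := by
    show w ⬝ᵥ x = _
    simp only [hwdef, dotProduct, Finset.sum_mul, Finset.mul_sum]
    rw [Finset.sum_comm]
    exact Finset.sum_congr rfl fun m _ => Finset.sum_congr rfl fun t _ => by ring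
  have hhi : ∑ m, max (c m * (matPos A m ⬝ᵥ x)) (c m * (matNeg A m ⬝ᵥ x)) + dotL x w
      = Hpoly A B i x + Qpoly A B j x := by
    rw [ht, Hpoly, Qpoly, ← Finset.sum_add_distrib, ← Finset.sum_add_distrib]
    refine Finset.sum_congr rfl fun m _ => ?_
    rw [← mul_max_of_nonneg _ _ (hcnn m), hcdef]
    ring
  rw [hhi] at himg
  exact ⟨_, by rw [← hhi]; exact add_le_add_left (Finset.sum_le_sum fun m _ => hminmax m) _, himg⟩

theorem sSup_convexHull (T : Set ℝ) (hne : T.Nonempty) (hbdd : BddAbove T) :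
    sSup (convexHull ℝ T) = sSup T := by
  apply le_antisymm
  · apply csSup_le (hne.mono (subset_convexHull ℝ T))
    intro y hy
    exact (convexHull_min (fun z hz => le_csSup hbdd hz) (convex_Iic _)) hy
  · refine csSup_le_csSup ?_ hne (subset_convexHull ℝ T)
    obtain ⟨M, hM⟩ := hbdd
    exact ⟨M, fun y hy => (convexHull_min (fun z hz => hM hz) (convex_Iic M)) hy⟩

theorem dual_subdivision_convexHull_zonotopes {p n : ℕ}
    (A : Matrix (Fin p) (Fin n) ℝ) (B : Matrix (Fin 2) (Fin p) ℝ) (x : Fin n → ℝ) :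
    max (Hpoly A B 0 x + Qpoly A B 1 x) (Hpoly A B 1 x + Qpoly A B 0 x)
      = sSup ((fun z => z ⬝ᵥ x) '' convexHull ℝ (zono A B 0 1 ∪ zono A B 1 0)) := by
  obtain ⟨lo₁, hl₁, he₁⟩ := image_zono A B 0 1 x
  obtain ⟨lo₂, hl₂, he₂⟩ := image_zono A B 1 0 x
  rw [show (fun z => z ⬝ᵥ x) = ⇑(dotL x) from rfl, LinearMap.image_convexHull,
    Set.image_union, he₁, he₂,
    sSup_convexHull _ (⟨lo₁, Set.mem_union_left _ (Set.left_mem_Icc.2 hl₁)⟩)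
      ((bddAbove_Icc).union (bddAbove_Icc)),
    csSup_union bddAbove_Icc (Set.nonempty_Icc.2 hl₁) bddAbove_Icc (Set.nonempty_Icc.2 hl₂),
    csSup_Icc hl₁, csSup_Icc hl₂]
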